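/- The set of interval-closed sets of a finite poset P is a convex geometry: (1) ∅ and P are interval-closed; (2) the intersection of two interval-closed sets is interval-closed; and (3) for every interval-closed set I ≠ P there exists x ∈ P \ I such that I ∪ {x} is interval-closed. -/

import Mathlib

/-- `I` is an interval-closed set of the poset `α`: whenever `x, y ∈ I` and
`x ≤ z ≤ y`, also `z ∈ I`. -/
def IsIntervalClosed {α : Type*} [PartialOrder α] (I : Set α) : Prop :=
  ∀ x ∈ I, ∀ y ∈ I, ∀ z, x ≤ z → z ≤ y → z ∈ I

/-- the interval-closed sets of a finite poset form a convex geometry: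
`∅` and the whole poset are interval-closed, the family is closed under intersection,
and every interval-closed set other than the whole poset can be augmented by a single
element to another interval-closed set. -/
theorem intervalClosed_convexGeometry {α : Type*} [Fintype α] [PartialOrder α] :
    IsIntervalClosed (∅ : Set α) ∧
    IsIntervalClosed (Set.univ : Set α) ∧
    (∀ I J : Set α, IsIntervalClosed I → IsIntervalClosed J → IsIntervalClosed (I ∩ J)) ∧
    (∀ I : Set α, IsIntervalClosed I → I ≠ Set.univ →
        ∃ x ∉ I, IsIntervalClosed (I ∪ {x})) := by
  refine ⟨fun x hx => hx.elim, fun _ _ _ _ _ _ _ => trivial,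
    fun I J hI hJ x hx y hy z h1 h2 => ⟨hI x hx.1 y hy.1 z h1 h2, hJ x hx.2 y hy.2 z h1 h2⟩,
    fun I hI hne => ?_⟩
  set S : Set α := {x | x ∉ I ∧ ∃ y ∈ I, x ≤ y} with hS
  by_cases hSne : S.Nonempty
  · obtain ⟨x, hxS, hxmax⟩ := Set.Finite.exists_maximalFor id S (Set.toFinite S) hSne
    refine ⟨x, hxS.1, ?_⟩
    rintro a (ha | rfl) b (hb | rfl) z h1 h2
    · exact Or.inl (hI a ha b hb z h1 h2)
    · -- a ∈ I, z ≤ x : use x's witness y ∈ I with x ≤ y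
      obtain ⟨y, hy, hxy⟩ := hxS.2
      exact Or.inl (hI a ha y hy z h1 (h2.trans hxy))
    · -- x ≤ z ≤ b ∈ I
      by_cases hzI : z ∈ I
      · exact Or.inl hzI
      · exact Or.inr (le_antisymm (hxmax ⟨hzI, b, hb, h2⟩ h1) h1)
    · exact Or.inr (le_antisymm h2 h1)
  · have hIc : Iᶜ.Nonempty := by
      rw [Set.nonempty_compl]; exact hne
    obtain ⟨x, hxc, hxmin⟩ := Set.Finite.exists_minimalFor id Iᶜ (Set.toFinite Iᶜ) hIc
    refine ⟨x, hxc, ?_⟩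
    rintro a (ha | rfl) b (hb | rfl) z h1 h2
    · exact Or.inl (hI a ha b hb z h1 h2)
    · -- a ∈ I, a ≤ z ≤ x
      by_cases hzI : z ∈ I
      · exact Or.inl hzI
      · exact Or.inr (le_antisymm h2 (hxmin hzI h2))
    · -- x ≤ z ≤ b ∈ I : but then x ∈ S, contradiction
      exact absurd ⟨a, hxc, b, hb, h1.trans h2⟩ hSne
    · exact Or.inr (le_antisymm h2 h1)
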